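/- Let G = (V, E) be a finite simple undirected graph with |V| = n, and let D(G) be the two-layer DAG with first layer L₁ = V and second layer L₂ constructed as follows: for each unordered pair {u,v} of distinct vertices of V, if {u,v} ∈ E add one vertex to L₂ with directed edges from both u and v to it, and if {u,v} ∉ E add two vertices to L₂, one with a directed edge from u and one with a directed edge from v; all edge weights and all (fixed) thresholds equal 1/2. Then in the deterministic linear influence process on D(G), for every seed set S ⊆ L₁ the size of the final activated set equals σ(S) = n·|S| − |{ {u,v} ∈ E : u ∈ S and v ∈ S }|; consequently σ(S) ≥ n·|S| if and only if S is an independent set of G. -/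

import Mathlib

open Finset
open scoped Classical

/-- The final activated set of the (deterministic) linear influence process on a
weighted digraph with weights `wt`, thresholds `θ` and direct influences `x`:
starting from `∅`, a vertex `v` activates once the total weight of edges from the
active set into `v` plus `x v` reaches `θ v`; the process runs for `|W|` rounds. -/
noncomputable def finalSet {W : Type*} [Fintype W] (wt : W → W → ℝ) (θ x : W → ℝ) :
    Finset W :=
  (fun S => S ∪ Finset.univ.filter (fun v => θ v ≤ (∑ u ∈ S, wt u v) + x v))^[Fintype.card W] ∅

/-- Vertex set of the two-layer DAG `D(G)` built from a simple graph `G`: the first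
layer is `V`; the second layer has one vertex for each edge `{u,v} ∈ E` (with edges
from both `u` and `v` into it) and, for each non-adjacent pair `{u,v}`, two vertices,
one receiving an edge from `u` and one from `v` (encoded by ordered pairs). -/
abbrev TwoLayer {V : Type*} [Fintype V] [DecidableEq V]
    (G : SimpleGraph V) [DecidableRel G.Adj] : Type _ :=
  V ⊕ ({e : Sym2 V // e ∈ G.edgeFinset} ⊕ {p : V × V // p.1 ≠ p.2 ∧ ¬ G.Adj p.1 p.2})

/-- All edges of `D(G)` have weight `1/2`. -/
noncomputable def dagWeight {V : Type*} [Fintype V] [DecidableEq V]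
    (G : SimpleGraph V) [DecidableRel G.Adj] :
    TwoLayer G → TwoLayer G → ℝ
  | Sum.inl u, Sum.inr (Sum.inl e) => if u ∈ e.val then (1 : ℝ) / 2 else 0
  | Sum.inl u, Sum.inr (Sum.inr p) => if u = p.val.1 then (1 : ℝ) / 2 else 0
  | _, _ => 0

/-- The size of the final activated set of the deterministic linear influence
process on `D(G)` (all thresholds `1/2`) started from the seed set `Seed`. -/
noncomputable def sigmaDag {V : Type*} [Fintype V] [DecidableEq V]
    (G : SimpleGraph V) [DecidableRel G.Adj] (Seed : Finset (TwoLayer G)) : ℕ :=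
  (finalSet (dagWeight G) (fun _ => (1 : ℝ) / 2)
    (fun z => if z ∈ Seed then (1 : ℝ) else 0)).card

section Aux
variable {V : Type*} [Fintype V] [DecidableEq V]
    (G : SimpleGraph V) [DecidableRel G.Adj] (S : Finset V)

/-- the limit predicate -/
@[reducible] def LPred : TwoLayer G → Prop :=
  Sum.elim (· ∈ S) (Sum.elim (fun e => ∃ u ∈ e.val, u ∈ S) (fun p => p.val.1 ∈ S))

noncomputable def ASet : Finset (TwoLayer G) := Finset.univ.filter (LPred G S)

noncomputable def stepF : Finset (TwoLayer G) → Finset (TwoLayer G) :=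
  fun T => T ∪ Finset.univ.filter (fun v => (1:ℝ)/2 ≤ (∑ u ∈ T, dagWeight G u v) +
    (if v ∈ S.image Sum.inl then (1:ℝ) else 0))

lemma wt_src_inr (a) (z : TwoLayer G) : dagWeight G (Sum.inr a) z = 0 := by
  rcases z with u | (e | p) <;> rfl

lemma wt_tgt_inl (z : TwoLayer G) (u : V) : dagWeight G z (Sum.inl u) = 0 := by
  rcases z with v | (e | p) <;> rfl

lemma key_cond (z : TwoLayer G) :
    ((1:ℝ)/2 ≤ (∑ u ∈ S.image Sum.inl, dagWeight G u z) +
      (if z ∈ S.image Sum.inl then (1:ℝ) else 0)) ↔ LPred G S z := by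
  rw [Finset.sum_image (by intro x _ y _ h; exact Sum.inl.inj h)]
  match z with
  | Sum.inl u =>
      have h0 : (∑ u' ∈ S, dagWeight G (Sum.inl u') (Sum.inl u)) = 0 :=
        Finset.sum_eq_zero fun _ _ => rfl
      rw [h0, zero_add]
      have hm : ((Sum.inl u : TwoLayer G) ∈ S.image Sum.inl) ↔ u ∈ S := by simp
      by_cases hu : u ∈ S <;> simp [LPred, hm, hu] <;> norm_num
  | Sum.inr (Sum.inl e) =>
      have hni : ((Sum.inr (Sum.inl e) : TwoLayer G)) ∉ S.image Sum.inl := by simp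
      rw [if_neg hni, add_zero]
      have h1 : (∑ u' ∈ S, dagWeight G (Sum.inl u') (Sum.inr (Sum.inl e)))
          = ((S.filter (fun u => u ∈ e.val)).card : ℝ) * (1/2) := by
        have : ∀ u' ∈ S, dagWeight G (Sum.inl u') (Sum.inr (Sum.inl e))
            = if u' ∈ e.val then (1:ℝ)/2 else 0 := fun _ _ => rfl
        rw [Finset.sum_congr rfl this, ← Finset.sum_filter, Finset.sum_const,
          nsmul_eq_mul]
      rw [h1]
      constructor
      · intro h
        have hc : 0 < (S.filter (fun u => u ∈ e.val)).card := by
          by_contra hc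
          push_neg at hc
          interval_cases h' : (S.filter (fun u => u ∈ e.val)).card <;> norm_num at h
        obtain ⟨u, hu⟩ := Finset.card_pos.mp hc
        simp only [Finset.mem_filter] at hu
        exact ⟨u, hu.2, hu.1⟩
      · intro h
        obtain ⟨u, hue, huS⟩ := h
        have hc : 0 < (S.filter (fun u => u ∈ e.val)).card :=
          Finset.card_pos.mpr ⟨u, Finset.mem_filter.mpr ⟨huS, hue⟩⟩
        have : (1:ℝ) ≤ ((S.filter (fun u => u ∈ e.val)).card : ℝ) := by
          exact_mod_cast hc
        nlinarith
  | Sum.inr (Sum.inr p) =>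
      have hni : ((Sum.inr (Sum.inr p) : TwoLayer G)) ∉ S.image Sum.inl := by simp
      rw [if_neg hni, add_zero]
      have h1 : (∑ u' ∈ S, dagWeight G (Sum.inl u') (Sum.inr (Sum.inr p)))
          = if p.val.1 ∈ S then (1:ℝ)/2 else 0 := by
        have : ∀ u' ∈ S, dagWeight G (Sum.inl u') (Sum.inr (Sum.inr p))
            = if u' = p.val.1 then (1:ℝ)/2 else 0 := fun _ _ => rfl
        rw [Finset.sum_congr rfl this, Finset.sum_ite_eq' S p.val.1 (fun _ => (1:ℝ)/2)]
      rw [h1]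
      by_cases hp : p.val.1 ∈ S <;> simp [LPred, hp] <;> norm_num

lemma stepF_empty : stepF G S ∅ = S.image Sum.inl := by
  ext z
  simp only [stepF, Finset.mem_union, Finset.notMem_empty, false_or, Finset.mem_filter,
    Finset.mem_univ, true_and, Finset.sum_empty, zero_add]
  by_cases hz : z ∈ S.image Sum.inl <;> simp [hz] <;> norm_num

lemma mem_ASet (z : TwoLayer G) : z ∈ ASet G S ↔ LPred G S z := by
  simp [ASet]

lemma stepF_seed : stepF G S (S.image Sum.inl) = ASet G S := by
  ext z
  simp only [stepF, Finset.mem_union, Finset.mem_filter, Finset.mem_univ, true_and,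
    mem_ASet, key_cond]
  constructor
  · rintro (h | h)
    · simp only [Finset.mem_image] at h
      obtain ⟨u, hu, rfl⟩ := h
      exact hu
    · exact h
  · exact Or.inr

lemma seed_subset_ASet : S.image Sum.inl ⊆ ASet G S := by
  intro z hz
  simp only [Finset.mem_image] at hz
  obtain ⟨u, hu, rfl⟩ := hz
  exact (mem_ASet G S _).mpr hu

lemma stepF_ASet : stepF G S (ASet G S) = ASet G S := by
  have hsum : ∀ z : TwoLayer G,
      (∑ u ∈ ASet G S, dagWeight G u z) = ∑ u ∈ S.image Sum.inl, dagWeight G u z := by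
    intro z
    refine (Finset.sum_subset (seed_subset_ASet G S) ?_).symm
    intro w hw hnw
    rcases w with u | a
    · exfalso
      have : u ∈ S := (mem_ASet G S _).mp hw
      exact hnw (Finset.mem_image_of_mem _ this)
    · exact wt_src_inr G a z
  unfold stepF
  rw [Finset.union_eq_left]
  intro z hz
  simp only [Finset.mem_filter, Finset.mem_univ, true_and] at hz
  rw [hsum z] at hz
  exact (mem_ASet G S _).mpr ((key_cond G S z).mp hz)

lemma finalSet_eq :
    finalSet (dagWeight G) (fun _ => (1 : ℝ) / 2)
      (fun z => if z ∈ S.image Sum.inl then (1 : ℝ) else 0) = ASet G S := by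
  have hF : finalSet (dagWeight G) (fun _ => (1 : ℝ) / 2)
      (fun z => if z ∈ S.image Sum.inl then (1 : ℝ) else 0)
      = (stepF G S)^[Fintype.card (TwoLayer G)] ∅ := by
    unfold finalSet
    congr 1
    funext T
    ext z
    simp [stepF]
  obtain ⟨m, hm⟩ | h : (∃ m, Fintype.card (TwoLayer G) = m + 2) ∨
      Fintype.card (TwoLayer G) < 2 := by
    rcases Nat.lt_or_ge (Fintype.card (TwoLayer G)) 2 with h | h
    · exact Or.inr h
    · exact Or.inl ⟨Fintype.card (TwoLayer G) - 2, by omega⟩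
  · rw [hF, hm, Function.iterate_add_apply]
    have h2 : (stepF G S)^[2] ∅ = ASet G S := by
      show stepF G S (stepF G S ∅) = _
      rw [stepF_empty, stepF_seed]
    rw [h2, Function.iterate_fixed (stepF_ASet G S)]
  · rw [hF]
    interval_cases h' : Fintype.card (TwoLayer G)
    · have hE : IsEmpty (TwoLayer G) := Fintype.card_eq_zero_iff.mp h'
      exact (Finset.eq_empty_of_isEmpty _).symm
    · rw [Function.iterate_one, stepF_empty]
      ext z
      rw [mem_ASet]
      rcases z with u | (e | p)
      · simp [LPred]
      · exfalso
        have : 1 < Fintype.card (TwoLayer G) :=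
          Fintype.one_lt_card_iff.mpr
            ⟨Sum.inr (Sum.inl e), Sum.inl e.val.out.1, by simp⟩
        omega
      · exfalso
        have : 1 < Fintype.card (TwoLayer G) :=
          Fintype.one_lt_card_iff.mpr
            ⟨Sum.inr (Sum.inr p), Sum.inl p.val.1, by simp⟩
        omega


lemma filterUnivAnd {α : Type*} [Fintype α] (s : Finset α) (p : α → Prop) :
    Finset.univ.filter (fun a => a ∈ s ∧ p a) = s.filter p := by
  ext a; simp

lemma card_ASet :
    (ASet G S).card = S.card
      + (G.edgeFinset.filter (fun e => ∃ u ∈ e, u ∈ S)).card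
      + (Finset.univ.filter (fun p : V × V =>
          (p.1 ≠ p.2 ∧ ¬ G.Adj p.1 p.2) ∧ p.1 ∈ S)).card := by
  have h1 : (ASet G S).card = Fintype.card {z : TwoLayer G // LPred G S z} :=
    (Fintype.card_subtype _).symm
  rw [h1]
  rw [Fintype.card_congr (Equiv.subtypeSum (p := LPred G S)), Fintype.card_sum]
  rw [Fintype.card_congr (Equiv.subtypeSum
    (p := fun b => LPred G S (Sum.inr b))), Fintype.card_sum]
  have hV : Fintype.card {a : V // LPred G S (Sum.inl a)} = S.card := by
    rw [Fintype.card_subtype]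
    have : Finset.univ.filter (fun x => LPred G S (Sum.inl x)) = S := by
      ext a; rw [Finset.mem_filter]; simp [LPred]
    rw [this]
  have hE : Fintype.card {b : {e : Sym2 V // e ∈ G.edgeFinset} //
      LPred G S (Sum.inr (Sum.inl b))}
      = (G.edgeFinset.filter (fun e => ∃ u ∈ e, u ∈ S)).card := by
    have he : Fintype.card {b : {e : Sym2 V // e ∈ G.edgeFinset} //
        LPred G S (Sum.inr (Sum.inl b))}
        = Fintype.card {e : Sym2 V // e ∈ G.edgeFinset ∧ ∃ u ∈ e, u ∈ S} :=
      Fintype.card_congr (Equiv.subtypeSubtypeEquivSubtypeInter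
        (fun e : Sym2 V => e ∈ G.edgeFinset) (fun e => ∃ u ∈ e, u ∈ S))
    rw [he, Fintype.card_subtype]
    congr 1
    ext e
    simp
  have hP : Fintype.card {b : {p : V × V // p.1 ≠ p.2 ∧ ¬ G.Adj p.1 p.2} //
      LPred G S (Sum.inr (Sum.inr b))}
      = (Finset.univ.filter (fun p : V × V =>
          (p.1 ≠ p.2 ∧ ¬ G.Adj p.1 p.2) ∧ p.1 ∈ S)).card := by
    have hp : Fintype.card {b : {p : V × V // p.1 ≠ p.2 ∧ ¬ G.Adj p.1 p.2} //
        LPred G S (Sum.inr (Sum.inr b))}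
        = Fintype.card {p : V × V // (p.1 ≠ p.2 ∧ ¬ G.Adj p.1 p.2) ∧ p.1 ∈ S} :=
      Fintype.card_congr (Equiv.subtypeSubtypeEquivSubtypeInter
        (fun p : V × V => p.1 ≠ p.2 ∧ ¬ G.Adj p.1 p.2) (fun p => p.1 ∈ S))
    rw [hp, Fintype.card_subtype]
  rw [hV, hE, hP]
  omega

lemma count_main :
    S.card + (G.edgeFinset.filter (fun e => ∃ u ∈ e, u ∈ S)).card
      + (Finset.univ.filter (fun p : V × V =>
          (p.1 ≠ p.2 ∧ ¬ G.Adj p.1 p.2) ∧ p.1 ∈ S)).card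
      + (G.edgeFinset.filter (fun e => ∀ u ∈ e, u ∈ S)).card
      = Fintype.card V * S.card := by
  set Q : Finset (V × V) := S ×ˢ (Finset.univ : Finset V) with hQdef
  have hQ : Q.card = S.card * Fintype.card V := by
    simp [hQdef]
  have hsplit1 : (Q.filter fun p => p.1 = p.2).card
      + (Q.filter fun p => ¬ p.1 = p.2).card = Q.card :=
    Finset.card_filter_add_card_filter_not _
  have hdiag : (Q.filter fun p => p.1 = p.2) = S.image (fun u => (u, u)) := by
    ext ⟨a, b⟩
    simp only [Finset.mem_filter, hQdef, Finset.mem_product, Finset.mem_univ, and_true,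
      Finset.mem_image, Prod.mk.injEq]
    aesop
  have hdiagc : (Q.filter fun p => p.1 = p.2).card = S.card := by
    rw [hdiag]
    exact Finset.card_image_of_injective _ (fun u v h => (Prod.ext_iff.mp h).1)
  have hsplit2 : ((Q.filter fun p => ¬ p.1 = p.2).filter fun p => G.Adj p.1 p.2).card
      + ((Q.filter fun p => ¬ p.1 = p.2).filter fun p => ¬ G.Adj p.1 p.2).card
      = (Q.filter fun p => ¬ p.1 = p.2).card :=
    Finset.card_filter_add_card_filter_not _
  have hP : ((Q.filter fun p => ¬ p.1 = p.2).filter fun p => ¬ G.Adj p.1 p.2)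
      = Finset.univ.filter (fun p : V × V =>
          (p.1 ≠ p.2 ∧ ¬ G.Adj p.1 p.2) ∧ p.1 ∈ S) := by
    ext ⟨a, b⟩
    simp only [Finset.mem_filter, hQdef, Finset.mem_product, Finset.mem_univ, and_true,
      true_and, ne_eq]
    tauto
  have hQA : ((Q.filter fun p => ¬ p.1 = p.2).filter fun p => G.Adj p.1 p.2)
      = Q.filter (fun p => G.Adj p.1 p.2) := by
    ext ⟨a, b⟩
    simp only [Finset.mem_filter]
    constructor
    · tauto
    · rintro ⟨hq, hadj⟩
      exact ⟨⟨hq, G.ne_of_adj hadj⟩, hadj⟩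
  have hmap : ∀ p ∈ Q.filter (fun p => G.Adj p.1 p.2),
      s(p.1, p.2) ∈ G.edgeFinset.filter (fun e => ∃ u ∈ e, u ∈ S) := by
    rintro ⟨a, b⟩ hp
    simp only [Finset.mem_filter, hQdef, Finset.mem_product, Finset.mem_univ, and_true]
      at hp
    simp only [Finset.mem_filter, SimpleGraph.mem_edgeFinset, SimpleGraph.mem_edgeSet,
      Sym2.mem_iff]
    exact ⟨hp.2, a, Or.inl rfl, hp.1⟩
  have hfib : (Q.filter (fun p => G.Adj p.1 p.2)).card
      = (G.edgeFinset.filter (fun e => ∃ u ∈ e, u ∈ S)).card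
        + (G.edgeFinset.filter (fun e => ∀ u ∈ e, u ∈ S)).card := by
    rw [Finset.card_eq_sum_card_fiberwise hmap]
    have hsum : ∀ e ∈ G.edgeFinset.filter (fun e => ∃ u ∈ e, u ∈ S),
        ((Q.filter (fun p => G.Adj p.1 p.2)).filter (fun p => s(p.1, p.2) = e)).card
        = 1 + (if ∀ u ∈ e, u ∈ S then 1 else 0) := by
      intro e he
      induction e using Sym2.ind with
      | _ a b =>
        simp only [Finset.mem_filter, SimpleGraph.mem_edgeFinset,
          SimpleGraph.mem_edgeSet, Sym2.mem_iff] at he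
        obtain ⟨hadj, hex⟩ := he
        have hab : a ≠ b := G.ne_of_adj hadj
        have habS : a ∈ S ∨ b ∈ S := by aesop
        have hfil : ((Q.filter (fun p => G.Adj p.1 p.2)).filter
              (fun p => s(p.1, p.2) = s(a, b)))
            = ({(a, b), (b, a)} : Finset (V × V)).filter (fun p => p.1 ∈ S) := by
          ext ⟨c, d⟩
          simp only [Finset.mem_filter, hQdef, Finset.mem_product, Finset.mem_univ,
            and_true, Sym2.eq_iff, Finset.mem_insert, Finset.mem_singleton,
            Prod.mk.injEq]
          constructor
          · rintro ⟨⟨hcS, _⟩, h | h⟩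
            · exact ⟨Or.inl h, hcS⟩
            · exact ⟨Or.inr h, hcS⟩
          · rintro ⟨h | h, hcS⟩
            · obtain ⟨rfl, rfl⟩ := h
              exact ⟨⟨hcS, hadj⟩, Or.inl ⟨rfl, rfl⟩⟩
            · obtain ⟨rfl, rfl⟩ := h
              exact ⟨⟨hcS, hadj.symm⟩, Or.inr ⟨rfl, rfl⟩⟩
        rw [hfil]
        have hne : ((a, b) : V × V) ≠ (b, a) := fun h => hab (Prod.ext_iff.mp h).1
        have hall : (∀ u ∈ s(a, b), u ∈ S) ↔ (a ∈ S ∧ b ∈ S) := by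
          simp only [Sym2.mem_iff]
          constructor
          · intro h
            exact ⟨h a (Or.inl rfl), h b (Or.inr rfl)⟩
          · rintro ⟨hA, hB⟩ u (rfl | rfl) <;> assumption
        rw [Finset.filter_insert, Finset.filter_singleton]
        by_cases hA : a ∈ S <;> by_cases hB : b ∈ S
        · simp [hA, hB, hne, hall]
        · simp [hA, hB, hne, hall]
        · simp [hA, hB, hne, hall]
        · tauto
    have hTT : (G.edgeFinset.filter (fun e => ∃ u ∈ e, u ∈ S)).filter
          (fun e => ∀ u ∈ e, u ∈ S)
        = G.edgeFinset.filter (fun e => ∀ u ∈ e, u ∈ S) := by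
      rw [Finset.filter_filter]
      ext e
      induction e using Sym2.ind with
      | _ a b =>
        simp only [Finset.mem_filter, Sym2.mem_iff]
        constructor
        · tauto
        · rintro ⟨hm, hall⟩
          exact ⟨hm, ⟨⟨a, Or.inl rfl, hall a (Or.inl rfl)⟩, hall⟩⟩
    rw [Finset.sum_congr rfl hsum, Finset.sum_add_distrib, Finset.sum_const,
      smul_eq_mul, mul_one, ← Finset.card_filter, hTT]
  rw [hP, hQA, hfib] at hsplit2
  rw [hdiagc] at hsplit1
  rw [hQ] at hsplit1
  have := Nat.mul_comm S.card (Fintype.card V)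
  omega

end Aux

/-- For every seed set `S` contained in the first layer of `D(G)`,
`σ(S) = n |S| - #{edges of G inside S}`; consequently `σ(S) ≥ n |S|` iff `S` is an
independent set of `G`. -/
theorem stmt14 {V : Type*} [Fintype V] [DecidableEq V]
    (G : SimpleGraph V) [DecidableRel G.Adj] (S : Finset V) :
    ((sigmaDag G (S.image Sum.inl) : ℤ) =
        (Fintype.card V : ℤ) * S.card -
          ((G.edgeFinset.filter (fun e => ∀ u ∈ e, u ∈ S)).card : ℤ)) ∧
    (Fintype.card V * S.card ≤ sigmaDag G (S.image Sum.inl) ↔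
      ∀ u ∈ S, ∀ v ∈ S, ¬ G.Adj u v) := by
  have hA : sigmaDag G (S.image Sum.inl) = (ASet G S).card := by
    unfold sigmaDag
    rw [finalSet_eq]
  have h1 := card_ASet G S
  have h2 := count_main G S
  have hcount : (ASet G S).card
      + (G.edgeFinset.filter (fun e => ∀ u ∈ e, u ∈ S)).card
      = Fintype.card V * S.card := by omega
  constructor
  · rw [hA]
    omega
  · rw [hA]
    constructor
    · intro h u hu v hv hadj
      have hmem : s(u, v) ∈ G.edgeFinset.filter (fun e => ∀ w ∈ e, w ∈ S) := by
        rw [Finset.mem_filter]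
        refine ⟨?_, ?_⟩
        · rw [SimpleGraph.mem_edgeFinset]
          exact hadj
        · intro w hw
          rw [Sym2.mem_iff] at hw
          rcases hw with rfl | rfl <;> assumption
      have hpos : 0 < (G.edgeFinset.filter (fun e => ∀ w ∈ e, w ∈ S)).card :=
        Finset.card_pos.mpr ⟨_, hmem⟩
      omega
    · intro hind
      have hzero : (G.edgeFinset.filter (fun e => ∀ w ∈ e, w ∈ S)) = ∅ := by
        rw [Finset.eq_empty_iff_forall_notMem]
        intro e
        induction e using Sym2.ind with
        | _ a b =>
          intro he
          rw [Finset.mem_filter, SimpleGraph.mem_edgeFinset,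
            SimpleGraph.mem_edgeSet] at he
          exact hind a (he.2 a (by simp)) b (he.2 b (by simp)) he.1
      have hz : (G.edgeFinset.filter (fun e => ∀ w ∈ e, w ∈ S)).card = 0 := by
        rw [hzero]
        rfl
      omega
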